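/- arXiv:1106.1857 — 5 statements merged into one kernel-verified Lean document; each statement's English description precedes it below -/
import Mathlib

section
/- Let L be a countably infinite set and l : L → ℝ a function with l(γ) ≥ l₀ for all γ ∈ L, for some constant l₀ > 0. Assume that N(T) := #{γ ∈ L : l(γ) ≤ T} is finite for every T ∈ ℝ, and set h := limsup_{T→∞} (log N(T))/T; assume h < ∞. Then: (i) for every s ∈ ℂ with Re(s) > h, the double series Σ_{γ∈L} Σ_{k≥1} e^{−k·s·l(γ)}/k converges absolutely; and (ii) for every real s < h, the series Σ_{γ∈L} e^{−s·l(γ)} diverges. -/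
open Filter Real

lemma zeta_aux_summable {L : Type*} (l : L → ℝ) (l₀ : ℝ) (hl₀ : 0 < l₀) (hl : ∀ γ, l₀ ≤ l γ)
    (hfin : ∀ T : ℝ, {γ : L | l γ ≤ T}.Finite) (σ a T₀ : ℝ) (ha : a < σ) (hσ : 0 < σ)
    (hT₀ : 1 ≤ T₀)
    (hN : ∀ T, T₀ ≤ T → ((Nat.card {γ : L // l γ ≤ T} : ℝ)) ≤ Real.exp (a * T)) :
    Summable (fun γ : L => Real.exp (-σ * l γ)) := by
  classical
  set B : ℝ := Real.exp (a * (T₀ + 1)) with hB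
  set r : ℝ := Real.exp (a - σ) with hr
  have hr0 : 0 ≤ r := (Real.exp_pos _).le
  have hr1 : r < 1 := by
    rw [hr, Real.exp_lt_one_iff]; linarith
  have hcard : ∀ (n : ℕ) (F : Finset L), (∀ γ ∈ F, l γ ≤ T₀ + n + 1) →
      (F.card : ℝ) ≤ Real.exp (a * (T₀ + n + 1)) := by
    intro n F hF
    have hsub : F ⊆ (hfin (T₀ + n + 1)).toFinset := by
      intro γ hγ
      rw [Set.Finite.mem_toFinset]
      exact hF γ hγ
    have h1 : (F.card : ℝ) ≤ ((hfin (T₀ + n + 1)).toFinset.card : ℝ) := by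
      exact_mod_cast Finset.card_le_card hsub
    have h2 : Nat.card {γ : L // l γ ≤ T₀ + n + 1} = (hfin (T₀ + n + 1)).toFinset.card :=
      (Nat.card_coe_set_eq _).trans (Set.ncard_eq_toFinset_card _ (hfin (T₀ + n + 1)))
    refine h1.trans ?_
    rw [← h2]
    exact hN _ (by have : (0:ℝ) ≤ (n:ℝ) := Nat.cast_nonneg n; linarith)
  have shell : ∀ (n : ℕ) (F : Finset L), (∀ γ ∈ F, ⌊l γ - T₀⌋₊ = n) →
      ∑ γ ∈ F, Real.exp (-σ * l γ) ≤ B * r ^ n := by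
    intro n F hF
    have hmem : ∀ γ ∈ F, l γ ≤ T₀ + n + 1 := by
      intro γ hγ
      have h1 : l γ - T₀ < (⌊l γ - T₀⌋₊ : ℝ) + 1 := Nat.lt_floor_add_one _
      rw [hF γ hγ] at h1
      linarith
    have hcardF := hcard n F hmem
    rcases Nat.eq_zero_or_pos n with hn | hn
    · subst hn
      have hterm : ∀ γ ∈ F, Real.exp (-σ * l γ) ≤ 1 := by
        intro γ hγ
        rw [show (1:ℝ) = Real.exp 0 by simp]
        apply Real.exp_le_exp.2
        nlinarith [hl γ]
      calc ∑ γ ∈ F, Real.exp (-σ * l γ) ≤ F.card • (1:ℝ) := Finset.sum_le_card_nsmul _ _ _ hterm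
        _ = (F.card : ℝ) := by simp
        _ ≤ Real.exp (a * (T₀ + (0:ℕ) + 1)) := hcardF
        _ = B * r ^ 0 := by rw [hB]; push_cast; ring_nf
    · have hterm : ∀ γ ∈ F, Real.exp (-σ * l γ) ≤ Real.exp (-σ * (T₀ + n)) := by
        intro γ hγ
        apply Real.exp_le_exp.2
        have hge : (n : ℝ) ≤ l γ - T₀ := by
          rcases lt_or_ge (l γ - T₀) 0 with hlt | hle
          · exfalso
            have : ⌊l γ - T₀⌋₊ = 0 := Nat.floor_of_nonpos hlt.le
            rw [hF γ hγ] at this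
            omega
          · rw [← hF γ hγ]; exact Nat.floor_le hle
        nlinarith
      have hsum : ∑ γ ∈ F, Real.exp (-σ * l γ) ≤ (F.card : ℝ) * Real.exp (-σ * (T₀ + n)) := by
        have := Finset.sum_le_card_nsmul F _ _ hterm
        rwa [nsmul_eq_mul] at this
      refine hsum.trans ?_
      have h1 : (F.card : ℝ) * Real.exp (-σ * (T₀ + n)) ≤
          Real.exp (a * (T₀ + n + 1)) * Real.exp (-σ * (T₀ + n)) :=
        mul_le_mul_of_nonneg_right hcardF (Real.exp_pos _).le
      refine h1.trans ?_
      rw [hB, hr, ← Real.exp_add, ← Real.exp_nat_mul, ← Real.exp_add]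
      apply Real.exp_le_exp.2
      nlinarith [Nat.cast_nonneg (α := ℝ) n]
  apply summable_of_sum_le (c := B * (1 - r)⁻¹) (fun γ => (Real.exp_pos _).le)
  intro F
  classical
  set M : ℕ := (F.sup fun γ => ⌊l γ - T₀⌋₊) + 1 with hM
  have hmap : ∀ γ ∈ F, ⌊l γ - T₀⌋₊ ∈ Finset.range M :=
    fun γ hγ => Finset.mem_range.2 (Nat.lt_succ_of_le (Finset.le_sup (f := fun γ => ⌊l γ - T₀⌋₊) hγ))
  rw [← Finset.sum_fiberwise_of_maps_to hmap (fun γ => Real.exp (-σ * l γ))]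
  have hB0 : 0 ≤ B := (Real.exp_pos _).le
  calc ∑ n ∈ Finset.range M, ∑ γ ∈ F.filter (fun γ => ⌊l γ - T₀⌋₊ = n), Real.exp (-σ * l γ)
      ≤ ∑ n ∈ Finset.range M, B * r ^ n := by
        refine Finset.sum_le_sum fun n _ => shell n _ fun γ hγ => (Finset.mem_filter.1 hγ).2
    _ = B * ∑ n ∈ Finset.range M, r ^ n := by rw [Finset.mul_sum]
    _ ≤ B * (1 - r)⁻¹ := by
        refine mul_le_mul_of_nonneg_left ?_ hB0
        refine ((summable_geometric_of_lt_one hr0 hr1).sum_le_tsum _ (fun i _ => pow_nonneg hr0 i)).trans_eq (tsum_geometric_of_lt_one hr0 hr1)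

/-- Abscissa of convergence of the (unweighted) dynamical zeta function.
`L` is the (countably infinite) set of primitive closed geodesics with length
function `l`, bounded below by `l₀ > 0`.  The counting function
`N(T) = #{γ : l γ ≤ T}` is finite for all `T`, and
`h = limsup_{T→∞} log N(T) / T` (a finite real number, stated via `EReal`).
Then the double series defining the zeta function converges absolutely for
`Re s > h`, and `Σ_γ e^{-s l(γ)}` diverges for real `s < h`. -/
theorem zeta_abscissa_of_convergence
    {L : Type*} [Countable L] [Infinite L] (l : L → ℝ) (l₀ : ℝ) (hl₀ : 0 < l₀)
    (hl : ∀ γ, l₀ ≤ l γ)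
    (hfin : ∀ T : ℝ, {γ : L | l γ ≤ T}.Finite)
    (h : ℝ)
    (hh : Filter.limsup
        (fun T : ℝ =>
          ((Real.log (Nat.card {γ : L // l γ ≤ T}) / T : ℝ) : EReal))
        Filter.atTop = (h : EReal)) :
    (∀ s : ℂ, h < s.re →
      Summable (fun p : L × ℕ =>
        ‖Complex.exp (-((p.2 : ℂ) + 1) * s * (l p.1 : ℂ)) / ((p.2 : ℂ) + 1)‖)) ∧
    (∀ s : ℝ, s < h → ¬ Summable (fun γ : L => Real.exp (-s * l γ))) := by
  classical
  obtain ⟨γ₀⟩ : Nonempty L := inferInstance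
  -- the counting function is at least 1 for large T
  have hpos : ∀ T : ℝ, l γ₀ ≤ T → 1 ≤ (Nat.card {γ : L // l γ ≤ T} : ℝ) := by
    intro T hT
    have : Finite {γ : L // l γ ≤ T} := (hfin T).to_subtype
    have : Nonempty {γ : L // l γ ≤ T} := ⟨⟨γ₀, hT⟩⟩
    exact_mod_cast Nat.one_le_iff_ne_zero.2 (Nat.card_pos).ne'
  -- h is nonnegative
  have h0 : 0 ≤ h := by
    have hfreq : ∃ᶠ T : ℝ in Filter.atTop,
        ((0:ℝ) : EReal) ≤ ((Real.log (Nat.card {γ : L // l γ ≤ T}) / T : ℝ) : EReal) := by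
      apply Filter.Eventually.frequently
      filter_upwards [Filter.eventually_ge_atTop (max (l γ₀) 1)] with T hT
      have hT1 : (1:ℝ) ≤ T := le_trans (le_max_right _ _) hT
      have hTl : l γ₀ ≤ T := le_trans (le_max_left _ _) hT
      rw [EReal.coe_le_coe_iff]
      exact div_nonneg (Real.log_nonneg (hpos T hTl)) (by linarith)
    have := Filter.le_limsup_of_frequently_le hfreq
    rw [hh] at this
    exact_mod_cast this
  constructor
  · -- Part (i)
    intro s hs
    set σ := s.re with hσdef
    have hσ : 0 < σ := lt_of_le_of_lt h0 hs
    set a := (h + σ) / 2 with ha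
    have hha : h < a := by rw [ha]; linarith
    have haσ : a < σ := by rw [ha]; linarith
    -- eventually N(T) ≤ exp(a T)
    have hev : ∀ᶠ T : ℝ in Filter.atTop,
        ((Real.log (Nat.card {γ : L // l γ ≤ T}) / T : ℝ) : EReal) < (a : EReal) := by
      refine Filter.eventually_lt_of_limsup_lt ?_ Filter.isBounded_le_of_top
      rw [hh]
      exact_mod_cast hha
    obtain ⟨T₀, hT₀⟩ := Filter.eventually_atTop.1 hev
    set T₁ := max T₀ 1 with hT₁def
    have hT₁1 : (1:ℝ) ≤ T₁ := le_max_right _ _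
    have hN : ∀ T, T₁ ≤ T → ((Nat.card {γ : L // l γ ≤ T} : ℝ)) ≤ Real.exp (a * T) := by
      intro T hT
      have hT1 : (1:ℝ) ≤ T := le_trans hT₁1 hT
      have hTpos : (0:ℝ) < T := by linarith
      have := hT₀ T (le_trans (le_max_left _ _) hT)
      rw [EReal.coe_lt_coe_iff] at this
      have hlog : Real.log (Nat.card {γ : L // l γ ≤ T}) < a * T := by
        rw [div_lt_iff₀ hTpos] at this; linarith [this]
      rcases Nat.eq_zero_or_pos (Nat.card {γ : L // l γ ≤ T}) with h0' | h0'
      · rw [h0']; exact_mod_cast (Real.exp_pos _).le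
      · have hcast : (0:ℝ) < (Nat.card {γ : L // l γ ≤ T} : ℝ) := by exact_mod_cast h0'
        calc (Nat.card {γ : L // l γ ≤ T} : ℝ)
            = Real.exp (Real.log (Nat.card {γ : L // l γ ≤ T})) := (Real.exp_log hcast).symm
          _ ≤ Real.exp (a * T) := Real.exp_le_exp.2 hlog.le
    have hsum : Summable (fun γ : L => Real.exp (-σ * l γ)) :=
      zeta_aux_summable l l₀ hl₀ hl hfin σ a T₁ haσ hσ hT₁1 hN
    have hgeo : Summable (fun k : ℕ => Real.exp (-σ * l₀) ^ k) :=
      summable_geometric_of_lt_one (Real.exp_pos _).le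
        (by rw [Real.exp_lt_one_iff]; nlinarith)
    have hprod : Summable (fun p : L × ℕ => Real.exp (-σ * l p.1) * Real.exp (-σ * l₀) ^ p.2) :=
      hsum.mul_of_nonneg hgeo (fun γ => (Real.exp_pos _).le) (fun k => pow_nonneg (Real.exp_pos _).le k)
    apply Summable.of_nonneg_of_le (fun p => norm_nonneg _) _ hprod
    rintro ⟨γ, k⟩
    have hre : (-((k : ℂ) + 1) * s * ((l γ : ℝ) : ℂ)).re = -((k:ℝ) + 1) * σ * l γ := by
      simp [Complex.mul_re, Complex.mul_im]
      exact Or.inl (Or.inl rfl)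
    have hnorm : ‖Complex.exp (-((k : ℂ) + 1) * s * ((l γ : ℝ) : ℂ)) / ((k : ℂ) + 1)‖
        = Real.exp (-((k:ℝ) + 1) * σ * l γ) / ((k:ℝ) + 1) := by
      rw [norm_div, Complex.norm_exp, hre]
      congr 1
      rw [show ((k:ℂ) + 1) = ((k + 1 : ℕ) : ℂ) by push_cast; ring]
      rw [Complex.norm_natCast]
      push_cast; ring
    rw [hnorm]
    have hk1 : (1:ℝ) ≤ (k:ℝ) + 1 := by
      have : (0:ℝ) ≤ (k:ℝ) := Nat.cast_nonneg k
      linarith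
    calc Real.exp (-((k:ℝ) + 1) * σ * l γ) / ((k:ℝ) + 1)
        ≤ Real.exp (-((k:ℝ) + 1) * σ * l γ) := div_le_self (Real.exp_pos _).le hk1
      _ ≤ Real.exp (-σ * l γ) * Real.exp (-σ * l₀) ^ k := by
          rw [← Real.exp_nat_mul, ← Real.exp_add]
          apply Real.exp_le_exp.2
          have hlγ := hl γ
          have hk0 : (0:ℝ) ≤ (k:ℝ) := Nat.cast_nonneg k
          nlinarith [mul_nonneg (mul_nonneg hk0 hσ.le) (sub_nonneg.2 hlγ)]
  · -- Part (ii)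
    intro s hs hsum
    rcases le_or_gt s 0 with hs0 | hs0
    · -- s ≤ 0 : terms don't tend to zero
      have hone : ∀ γ : L, (1:ℝ) ≤ Real.exp (-s * l γ) := by
        intro γ
        rw [show (1:ℝ) = Real.exp 0 by simp]
        apply Real.exp_le_exp.2
        nlinarith [hl γ]
      have htend := hsum.tendsto_cofinite_zero
      have hev : ∀ᶠ γ : L in Filter.cofinite, Real.exp (-s * l γ) < 1 :=
        htend.eventually_lt_const one_pos
      obtain ⟨γ, hγ⟩ := hev.exists
      exact absurd (hone γ) (not_le.2 hγ)
    · -- 0 < s : counting bound gives limsup ≤ s < h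
      set C := ∑' γ : L, Real.exp (-s * l γ) with hC
      have hC0 : 0 < C :=
        lt_of_lt_of_le (Real.exp_pos (-s * l γ₀))
          (hsum.le_tsum γ₀ (fun _ _ => (Real.exp_pos _).le))
      have hkey : ∀ T : ℝ, (Nat.card {γ : L // l γ ≤ T} : ℝ) ≤ C * Real.exp (s * T) := by
        intro T
        set F := (hfin T).toFinset with hF
        have hcv : Nat.card {γ : L // l γ ≤ T} = F.card :=
          (Nat.card_coe_set_eq _).trans (Set.ncard_eq_toFinset_card _ (hfin T))
        have hcardval : (Nat.card {γ : L // l γ ≤ T} : ℝ) = (F.card : ℝ) := by rw [hcv]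
        have hterm : ∀ γ ∈ F, Real.exp (-s * T) ≤ Real.exp (-s * l γ) := by
          intro γ hγ
          rw [Set.Finite.mem_toFinset] at hγ
          have hγ' : l γ ≤ T := hγ
          apply Real.exp_le_exp.2
          nlinarith [mul_le_mul_of_nonneg_left hγ' hs0.le]
        have h1 : (F.card : ℝ) * Real.exp (-s * T) ≤ ∑ γ ∈ F, Real.exp (-s * l γ) := by
          have := Finset.card_nsmul_le_sum F _ _ hterm
          rwa [nsmul_eq_mul] at this
        have h2 : ∑ γ ∈ F, Real.exp (-s * l γ) ≤ C :=
          hsum.sum_le_tsum F (fun _ _ => (Real.exp_pos _).le)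
        rw [hcardval]
        have h3 : (F.card : ℝ) * Real.exp (-s * T) ≤ C := h1.trans h2
        have := mul_le_mul_of_nonneg_right h3 (Real.exp_pos (s * T)).le
        rwa [mul_assoc, ← Real.exp_add, neg_mul, neg_add_cancel, Real.exp_zero, mul_one] at this
      -- limsup bound
      have hle : Filter.limsup
          (fun T : ℝ => ((Real.log (Nat.card {γ : L // l γ ≤ T}) / T : ℝ) : EReal))
          Filter.atTop ≤ (s : EReal) := by
        have htendB : Filter.Tendsto (fun T : ℝ => ((Real.log C / T + s : ℝ) : EReal))
            Filter.atTop (nhds (s : EReal)) := by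
          rw [EReal.tendsto_coe]
          have : Filter.Tendsto (fun T : ℝ => Real.log C / T) Filter.atTop (nhds 0) :=
            Filter.Tendsto.div_atTop tendsto_const_nhds Filter.tendsto_id
          simpa using this.add_const s
        have hEv : (fun T : ℝ => ((Real.log (Nat.card {γ : L // l γ ≤ T}) / T : ℝ) : EReal))
            ≤ᶠ[Filter.atTop] (fun T : ℝ => ((Real.log C / T + s : ℝ) : EReal)) := by
          filter_upwards [Filter.eventually_ge_atTop (max (l γ₀) 1)] with T hT
          have hT1 : (1:ℝ) ≤ T := le_trans (le_max_right _ _) hT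
          have hTl : l γ₀ ≤ T := le_trans (le_max_left _ _) hT
          have hTpos : (0:ℝ) < T := by linarith
          rw [EReal.coe_le_coe_iff]
          have hN1 := hpos T hTl
          have hlog : Real.log (Nat.card {γ : L // l γ ≤ T}) ≤ Real.log C + s * T := by
            have := Real.log_le_log (by linarith) (hkey T)
            rwa [Real.log_mul hC0.ne' (Real.exp_pos _).ne', Real.log_exp] at this
          rw [div_le_iff₀ hTpos]
          have : Real.log C / T * T = Real.log C := div_mul_cancel₀ _ hTpos.ne'
          nlinarith [hlog]
        have hmono := Filter.limsup_le_limsup hEv Filter.isCobounded_le_of_bot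
          Filter.isBounded_le_of_top
        rw [htendB.limsup_eq] at hmono
        exact hmono
      rw [hh] at hle
      have : h ≤ s := by exact_mod_cast hle
      linarith
end

section
/- Let L be a countable set, l : L → ℝ a function with l(γ) ≥ l₀ for all γ ∈ L for some constant l₀ > 0, w : L → [0,∞) a weight, and η > 0. Assume that for every T ∈ ℝ the sum θ(T) := Σ_{γ ∈ L with l(γ) ≤ T} l(γ)·w(γ) is finite, and that e^{−ηT}·θ(T) → 1/η as T → ∞. Then Σ_{γ ∈ L with l(γ) ≤ T} w(γ) ∼ e^{ηT}/(ηT) as T → ∞, i.e. the ratio of the two sides tends to 1. -/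
open Filter Real Set

/-- Partial-summation (Abel summation) step of the Wiener–Ikehara argument:
if the length-weighted counting function `θ(T) = Σ_{l(γ) ≤ T} l(γ) w(γ)` is
finite for every `T` (here: summable over the subtype) and satisfies
`e^{-ηT} θ(T) → 1/η`, then the weighted orbit counting function satisfies
`Σ_{l(γ) ≤ T} w(γ) ∼ e^{ηT}/(ηT)` as `T → ∞`. -/
theorem weighted_counting_from_chebyshev
    {L : Type*} [Countable L] (l : L → ℝ) (l₀ : ℝ) (hl₀ : 0 < l₀)
    (hl : ∀ γ, l₀ ≤ l γ) (w : L → ℝ) (hw : ∀ γ, 0 ≤ w γ) (η : ℝ) (hη : 0 < η)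
    (hfin : ∀ T : ℝ, Summable (fun γ : {γ : L // l γ ≤ T} => l γ.1 * w γ.1))
    (htheta : Filter.Tendsto
      (fun T : ℝ => Real.exp (-η * T) * ∑' γ : {γ : L // l γ ≤ T}, l γ.1 * w γ.1)
      Filter.atTop (nhds (1 / η))) :
    Filter.Tendsto
      (fun T : ℝ =>
        (∑' γ : {γ : L // l γ ≤ T}, w γ.1) / (Real.exp (η * T) / (η * T)))
      Filter.atTop (nhds 1) := by
  classical
  set f : L → ℝ := fun γ => l γ * w γ with hf
  have hfnn : ∀ γ, 0 ≤ f γ := fun γ => mul_nonneg (le_trans hl₀.le (hl γ)) (hw γ)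
  -- indicator versions
  have hfinI : ∀ T : ℝ, Summable ({γ : L | l γ ≤ T}.indicator f) := by
    intro T
    rw [← summable_subtype_iff_indicator]
    exact hfin T
  have hθeq : ∀ T : ℝ, (∑' γ : {γ : L // l γ ≤ T}, l γ.1 * w γ.1)
      = ∑' γ, ({γ : L | l γ ≤ T}).indicator f γ := fun T => tsum_subtype _ f
  have hwindnn : ∀ T : ℝ, ∀ γ, 0 ≤ ({γ : L | l γ ≤ T}).indicator w γ :=
    fun T γ => Set.indicator_nonneg (fun γ _ => hw γ) γ
  have hfindnn : ∀ T : ℝ, ∀ γ, 0 ≤ ({γ : L | l γ ≤ T}).indicator f γ :=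
    fun T γ => Set.indicator_nonneg (fun γ _ => hfnn γ) γ
  have hfinW : ∀ T : ℝ, Summable ({γ : L | l γ ≤ T}.indicator w) := by
    intro T
    refine Summable.of_nonneg_of_le (hwindnn T) (fun γ => ?_) ((hfinI T).div_const l₀)
    by_cases hγ : l γ ≤ T
    · have hm : γ ∈ {γ : L | l γ ≤ T} := hγ
      rw [Set.indicator_of_mem hm, Set.indicator_of_mem hm]
      rw [le_div_iff₀ hl₀]
      calc w γ * l₀ = l₀ * w γ := by ring
        _ ≤ l γ * w γ := mul_le_mul_of_nonneg_right (hl γ) (hw γ)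
    · have hm : γ ∉ {γ : L | l γ ≤ T} := hγ
      rw [Set.indicator_of_notMem hm, Set.indicator_of_notMem hm]
      simp
  have hNeq : ∀ T : ℝ, (∑' γ : {γ : L // l γ ≤ T}, w γ.1)
      = ∑' γ, ({γ : L | l γ ≤ T}).indicator w γ := fun T => tsum_subtype _ w
  set θ : ℝ → ℝ := fun T => ∑' γ, ({γ : L | l γ ≤ T}).indicator f γ with hθ
  set N : ℝ → ℝ := fun T => ∑' γ, ({γ : L | l γ ≤ T}).indicator w γ with hN
  have hθnn : ∀ T, 0 ≤ θ T := fun T => tsum_nonneg (hfindnn T)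
  -- rewrite the hypothesis and the goal
  have htheta' : Tendsto (fun T : ℝ => Real.exp (-η * T) * θ T) atTop (nhds (1 / η)) := by
    simpa only [hθeq] using htheta
  have hgoal : ∀ T : ℝ,
      (∑' γ : {γ : L // l γ ≤ T}, w γ.1) / (Real.exp (η * T) / (η * T))
        = N T / (Real.exp (η * T) / (η * T)) := by
    intro T; rw [hNeq]
  simp only [hgoal]
  -- key sandwich
  have key : ∀ S T : ℝ, 0 < S → S ≤ T →
      (θ T - θ S) / T ≤ N T ∧ N T ≤ θ S / l₀ + θ T / S := by
    intro S T hS hST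
    have hT : 0 < T := lt_of_lt_of_le hS hST
    constructor
    · -- lower bound
      rw [div_le_iff₀ hT]
      have hpt : ∀ γ, ({γ : L | l γ ≤ T}).indicator f γ - ({γ : L | l γ ≤ S}).indicator f γ
          ≤ T * ({γ : L | l γ ≤ T}).indicator w γ := by
        intro γ
        simp only [Set.indicator_apply, Set.mem_setOf_eq, hf]
        by_cases h2 : l γ ≤ T
        · by_cases h1 : l γ ≤ S
          · simp only [if_pos h1, if_pos h2, sub_self]
            exact mul_nonneg hT.le (hw γ)
          · simp only [if_neg h1, if_pos h2, sub_zero]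
            exact mul_le_mul_of_nonneg_right h2 (hw γ)
        · have h1 : ¬ l γ ≤ S := fun h => h2 (h.trans hST)
          simp [if_neg h1, if_neg h2]
      calc θ T - θ S = ∑' γ, (({γ : L | l γ ≤ T}).indicator f γ
              - ({γ : L | l γ ≤ S}).indicator f γ) := (Summable.tsum_sub (hfinI T) (hfinI S)).symm
        _ ≤ ∑' γ, T * ({γ : L | l γ ≤ T}).indicator w γ :=
            Summable.tsum_le_tsum hpt ((hfinI T).sub (hfinI S)) ((hfinW T).mul_left T)
        _ = T * N T := tsum_mul_left
        _ = N T * T := by ring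
    · -- upper bound
      have hq : θ S / l₀ + θ T / S = (S / l₀ * θ S + θ T) / S := by
        field_simp
      rw [hq, le_div_iff₀ hS]
      have hpt : ∀ γ, S * ({γ : L | l γ ≤ T}).indicator w γ
          ≤ (S / l₀) * ({γ : L | l γ ≤ S}).indicator f γ
            + ({γ : L | l γ ≤ T}).indicator f γ := by
        intro γ
        simp only [Set.indicator_apply, Set.mem_setOf_eq, hf]
        by_cases h2 : l γ ≤ T
        · by_cases h1 : l γ ≤ S
          · simp only [if_pos h1, if_pos h2]
            have h4 : S * w γ ≤ S / l₀ * (l γ * w γ) := by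
              rw [div_mul_eq_mul_div, le_div_iff₀ hl₀]
              nlinarith [mul_le_mul_of_nonneg_left (hl γ) (mul_nonneg hS.le (hw γ))]
            linarith [h4, mul_nonneg (hl₀.le.trans (hl γ)) (hw γ)]
          · simp only [if_neg h1, if_pos h2, mul_zero, zero_add]
            exact mul_le_mul_of_nonneg_right (le_of_lt (not_le.mp h1)) (hw γ)
        · have h1 : ¬ l γ ≤ S := fun h => h2 (h.trans hST)
          simp [if_neg h1, if_neg h2]
      calc N T * S = S * N T := by ring
        _ = ∑' γ, S * ({γ : L | l γ ≤ T}).indicator w γ := tsum_mul_left.symm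
        _ ≤ ∑' γ, ((S / l₀) * ({γ : L | l γ ≤ S}).indicator f γ
              + ({γ : L | l γ ≤ T}).indicator f γ) :=
            Summable.tsum_le_tsum hpt ((hfinW T).mul_left S)
              (((hfinI S).mul_left _).add (hfinI T))
        _ = (S / l₀) * θ S + θ T := by
            rw [Summable.tsum_add ((hfinI S).mul_left _) (hfinI T), tsum_mul_left]
  clear_value θ N
  -- now the limit argument
  rw [Metric.tendsto_nhds]
  intro ε hε
  set δ : ℝ := min ε 1 with hδdef
  have hδ : 0 < δ := lt_min hε one_pos
  have hδ1 : δ ≤ 1 := min_le_right _ _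
  have hδε : δ ≤ ε := min_le_left _ _
  set α : ℝ := 1 / (1 + δ / 2) with hαdef
  have hβ : (0:ℝ) < 1 + δ / 2 := by linarith
  have hα0 : 0 < α := by positivity
  have hα1 : α < 1 := by
    rw [hαdef, div_lt_one hβ]; linarith
  have hαval : 1 / α = 1 + δ / 2 := by
    rw [hαdef, one_div_one_div]
  clear_value δ α
  -- A tends to 1
  have hA : Tendsto (fun T : ℝ => η * (Real.exp (-η * T) * θ T)) atTop (nhds 1) := by
    have := htheta'.const_mul η
    simpa [mul_one_div, div_self hη.ne', mul_inv_cancel₀ hη.ne'] using this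
  -- composition at α T
  have hmul : Tendsto (fun T : ℝ => α * T) atTop atTop :=
    Tendsto.const_mul_atTop hα0 tendsto_id
  have hcomp : Tendsto (fun T : ℝ => Real.exp (-η * (α * T)) * θ (α * T)) atTop
      (nhds (1 / η)) := htheta'.comp hmul
  have hc : 0 < η * (1 - α) := mul_pos hη (by linarith)
  have hexp : Tendsto (fun T : ℝ => Real.exp (-(η * (1 - α)) * T)) atTop (nhds 0) := by
    have h1 : Tendsto (fun T : ℝ => (η * (1 - α)) * T) atTop atTop :=
      Tendsto.const_mul_atTop hc tendsto_id
    exact (tendsto_exp_neg_atTop_nhds_zero.comp h1).congr fun T => by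
      simp only [Function.comp_apply, neg_mul]
  have hfact : ∀ T : ℝ, Real.exp (-η * T) * θ (α * T)
      = Real.exp (-(η * (1 - α)) * T) * (Real.exp (-η * (α * T)) * θ (α * T)) := by
    intro T
    have harg : -(η * (1 - α)) * T + -η * (α * T) = -η * T := by ring
    rw [← mul_assoc, ← Real.exp_add, harg]
  have hC : Tendsto (fun T : ℝ => η * (Real.exp (-η * T) * θ (α * T))) atTop (nhds 0) := by
    have h1 : Tendsto (fun T : ℝ => Real.exp (-(η * (1 - α)) * T)
        * (Real.exp (-η * (α * T)) * θ (α * T))) atTop (nhds (0 * (1 / η))) :=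
      hexp.mul hcomp
    rw [zero_mul] at h1
    have h2 := h1.const_mul η
    rw [mul_zero] at h2
    refine h2.congr fun T => ?_
    rw [← hfact T]
  -- T * exp(-cT) → 0
  have hpoly : Tendsto (fun T : ℝ => T * Real.exp (-(η * (1 - α)) * T)) atTop (nhds 0) := by
    have h1 : Tendsto (fun T : ℝ => (η * (1 - α)) * T) atTop atTop :=
      Tendsto.const_mul_atTop hc tendsto_id
    have h2 := (tendsto_pow_mul_exp_neg_atTop_nhds_zero 1).comp h1
    have h3 := h2.const_mul (1 / (η * (1 - α)))
    rw [mul_zero] at h3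
    refine h3.congr fun T => ?_
    simp only [Function.comp_apply, pow_one, neg_mul]
    field_simp [(sub_pos.mpr hα1).ne']
  have hB : Tendsto (fun T : ℝ => η * T * (Real.exp (-η * T) * θ (α * T))) atTop (nhds 0) := by
    have h1 : Tendsto (fun T : ℝ => (T * Real.exp (-(η * (1 - α)) * T))
        * (Real.exp (-η * (α * T)) * θ (α * T))) atTop (nhds (0 * (1 / η))) :=
      hpoly.mul hcomp
    rw [zero_mul] at h1
    have h2 := h1.const_mul η
    rw [mul_zero] at h2
    refine h2.congr fun T => ?_
    rw [hfact T]
    ring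
  -- eventual estimates
  have hAe : ∀ᶠ T in atTop, |η * (Real.exp (-η * T) * θ T) - 1| < δ / 8 := by
    have := Metric.tendsto_nhds.mp hA (δ / 8) (by positivity)
    simpa only [Real.dist_eq] using this
  have hCe : ∀ᶠ T in atTop, |η * (Real.exp (-η * T) * θ (α * T))| < δ / 2 := by
    have := Metric.tendsto_nhds.mp hC (δ / 2) (by positivity)
    simpa only [Real.dist_eq, sub_zero] using this
  have hBe : ∀ᶠ T in atTop, |η * T * (Real.exp (-η * T) * θ (α * T))| < l₀ * δ / 8 := by
    have := Metric.tendsto_nhds.mp hB (l₀ * δ / 8) (by positivity)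
    simpa only [Real.dist_eq, sub_zero] using this
  filter_upwards [hAe, hCe, hBe, eventually_gt_atTop (0:ℝ)] with T hAT hCT hBT hT
  -- abbreviations
  set A := η * (Real.exp (-η * T) * θ T) with hAdef
  set C := η * (Real.exp (-η * T) * θ (α * T)) with hCdef
  set B := η * T * (Real.exp (-η * T) * θ (α * T)) with hBdef
  clear_value A C B
  have hS : 0 < α * T := mul_pos hα0 hT
  have hST : α * T ≤ T := by nlinarith
  obtain ⟨hlow, hup⟩ := key (α * T) T hS hST
  have hηT : 0 < η * T := mul_pos hη hT
  have hcoef : 0 < η * T * Real.exp (-η * T) := by positivity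
  have hexpT : Real.exp (η * T) ≠ 0 := (Real.exp_pos _).ne'
  -- rewrite ratio
  have hR : N T / (Real.exp (η * T) / (η * T)) = η * T * Real.exp (-η * T) * N T := by
    rw [neg_mul, Real.exp_neg]
    field_simp
  rw [hR, Real.dist_eq, abs_lt]
  -- lower estimate
  have h1 : A - C ≤ η * T * Real.exp (-η * T) * N T := by
    have := mul_le_mul_of_nonneg_left hlow hcoef.le
    have heq : η * T * Real.exp (-η * T) * ((θ T - θ (α * T)) / T) = A - C := by
      rw [hAdef, hCdef]
      field_simp
    rw [heq] at this
    linarith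
  -- upper estimate
  have h2 : η * T * Real.exp (-η * T) * N T ≤ B / l₀ + (1 + δ / 2) * A := by
    have := mul_le_mul_of_nonneg_left hup hcoef.le
    have heq : η * T * Real.exp (-η * T) * (θ (α * T) / l₀ + θ T / (α * T))
        = B / l₀ + (1 / α) * A := by
      rw [hAdef, hBdef]
      field_simp
    rw [heq, hαval] at this
    exact this
  have hAbd := abs_lt.mp hAT
  have hCbd := abs_lt.mp hCT
  have hBbd := abs_lt.mp hBT
  have hBl : B / l₀ < δ / 8 := by
    rw [div_lt_iff₀ hl₀]
    linarith only [hBbd.2]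
  constructor
  · linarith only [h1, hAbd.1, hCbd.2, hδε, hδ]
  · have hprod : (1 + δ / 2) * A ≤ (1 + δ / 2) * (1 + δ / 8) :=
      mul_le_mul_of_nonneg_left (by linarith only [hAbd.2]) (by linarith only [hδ])
    have hexpand : (1 + δ / 2) * (1 + δ / 8) = 1 + (5 / 8) * δ + δ * δ / 16 := by ring
    have hδδ : δ * δ ≤ δ := by
      calc δ * δ ≤ δ * 1 := mul_le_mul_of_nonneg_left hδ1 hδ.le
        _ = δ := mul_one δ
    linarith only [h2, hprod, hexpand, hδδ, hBl, hδε, hδ]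
end

section
/- Let L be a countable set, l : L → ℝ a function with l(γ) ≥ l₀ for all γ ∈ L for some constant l₀ > 0, and let w, v : L → [0,∞) be two weights. Assume there are constants C > 0 and ε > 0 and a function r : L × ℕ≥1 → ℝ such that v(γ)^k = w(γ)^k·(1 + r(γ,k)) and |r(γ,k)| ≤ C·e^{−ε·k·l(γ)} for all γ ∈ L and k ≥ 1. Let η ∈ ℝ and assume: (a) for every real σ > η the double series Σ_{γ∈L} Σ_{k≥1} w(γ)^k · e^{−k·σ·l(γ)}/k converges, so that Z_w(s) := exp( Σ_{γ,k} w(γ)^k e^{−ksl(γ)}/k ) is defined and analytic on {Re(s) > η}; and (b) there exist an open set U ⊆ ℂ containing {s : Re(s) ≥ η} and an analytic, nowhere-vanishing function g on U with Z_w(s) = g(s)/(s−η) for every s ∈ U with Re(s) > η. Then the double series Σ_{γ∈L} Σ_{k≥1} v(γ)^k · e^{−k·s·l(γ)}/k converges absolutely for every s with Re(s) > η, and there exist an open set U' ⊆ ℂ containing {s : Re(s) ≥ η} and an analytic, nowhere-vanishing function g' on U' such that Z_v(s) := exp( Σ_{γ,k} v(γ)^k e^{−ksl(γ)}/k ) satisfies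 Z_v(s) = g'(s)/(s−η) for every s ∈ U' with Re(s) > η. -/
/-- The logarithm of the weighted dynamical zeta function:
`F(s) = Σ_{γ∈L} Σ_{k≥1} u(γ)^k e^{-k s l(γ)} / k`, where `k = p.2 + 1`. -/
noncomputable def zetaLog {L : Type*} (l u : L → ℝ) (s : ℂ) : ℂ :=
  ∑' p : L × ℕ, (u p.1 : ℂ) ^ (p.2 + 1) *
    Complex.exp (-((p.2 : ℂ) + 1) * s * (l p.1 : ℂ)) / ((p.2 : ℂ) + 1)

/-- A single term of `zetaLog`. -/
noncomputable def zterm {L : Type*} (l u : L → ℝ) (s : ℂ) (p : L × ℕ) : ℂ :=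
  (u p.1 : ℂ) ^ (p.2 + 1) *
    Complex.exp (-((p.2 : ℂ) + 1) * s * (l p.1 : ℂ)) / ((p.2 : ℂ) + 1)

lemma zetaLog_eq_tsum_zterm {L : Type*} (l u : L → ℝ) (s : ℂ) :
    zetaLog l u s = ∑' p : L × ℕ, zterm l u s p := rfl

lemma re_exponent {L : Type*} (l : L → ℝ) (s : ℂ) (p : L × ℕ) :
    (-((p.2 : ℂ) + 1) * s * (l p.1 : ℂ)).re = -((p.2 : ℝ) + 1) * s.re * l p.1 := by
  simp [Complex.mul_re, Complex.mul_im]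

lemma norm_exp_exponent {L : Type*} (l : L → ℝ) (s : ℂ) (p : L × ℕ) :
    ‖Complex.exp (-((p.2 : ℂ) + 1) * s * (l p.1 : ℂ))‖
      = Real.exp (-((p.2 : ℝ) + 1) * s.re * l p.1) := by
  rw [Complex.norm_exp, re_exponent]

lemma norm_zterm {L : Type*} (l u : L → ℝ) (hu : ∀ γ, 0 ≤ u γ) (s : ℂ) (p : L × ℕ) :
    ‖zterm l u s p‖
      = u p.1 ^ (p.2 + 1) * Real.exp (-((p.2 : ℝ) + 1) * s.re * l p.1) / ((p.2 : ℝ) + 1) := by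
  have hk : ((p.2 : ℂ) + 1) = (((p.2 : ℝ) + 1 : ℝ) : ℂ) := by push_cast; ring
  rw [zterm, norm_div, norm_mul, norm_pow, norm_exp_exponent, hk, Complex.norm_real,
    Complex.norm_real, Real.norm_eq_abs, Real.norm_eq_abs, abs_of_nonneg (hu p.1),
    abs_of_nonneg (by positivity)]

/-- The difference term. -/
noncomputable def dterm {L : Type*} (l w : L → ℝ) (r : L → ℕ → ℝ) (s : ℂ) (p : L × ℕ) : ℂ :=
  (w p.1 : ℂ) ^ (p.2 + 1) * (r p.1 p.2 : ℂ) *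
    Complex.exp (-((p.2 : ℂ) + 1) * s * (l p.1 : ℂ)) / ((p.2 : ℂ) + 1)

lemma norm_dterm {L : Type*} (l w : L → ℝ) (hw : ∀ γ, 0 ≤ w γ) (r : L → ℕ → ℝ)
    (s : ℂ) (p : L × ℕ) :
    ‖dterm l w r s p‖
      = w p.1 ^ (p.2 + 1) * |r p.1 p.2| *
          Real.exp (-((p.2 : ℝ) + 1) * s.re * l p.1) / ((p.2 : ℝ) + 1) := by
  have hk : ((p.2 : ℂ) + 1) = (((p.2 : ℝ) + 1 : ℝ) : ℂ) := by push_cast; ring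
  rw [dterm, norm_div, norm_mul, norm_mul, norm_pow, norm_exp_exponent, hk,
    Complex.norm_real, Complex.norm_real, Complex.norm_real, Real.norm_eq_abs,
    Real.norm_eq_abs, Real.norm_eq_abs, abs_of_nonneg (hw p.1),
    abs_of_nonneg (show (0:ℝ) ≤ (p.2 : ℝ) + 1 by positivity)]

/-- Comparison of zeta functions of asymptotically exponentially close weights
(part 1).  Here `r γ k` models the relative error `r(γ, k+1)` for the `(k+1)`-st
iterate: `v(γ)^{k+1} = w(γ)^{k+1}(1 + r(γ,k+1))` with
`|r(γ,k+1)| ≤ C e^{-ε (k+1) l(γ)}`.  If `Z_w` converges on `Re s > η` and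
extends to a non-vanishing analytic function on a neighbourhood of
`Re s ≥ η` except for a simple pole at `η`, then so does `Z_v`. -/
theorem close_weights_zeta_extension
    {L : Type*} [Countable L] (l : L → ℝ) (l₀ : ℝ) (hl₀ : 0 < l₀)
    (hl : ∀ γ, l₀ ≤ l γ) (w v : L → ℝ) (hw : ∀ γ, 0 ≤ w γ) (hv : ∀ γ, 0 ≤ v γ)
    (C ε : ℝ) (hC : 0 < C) (hε : 0 < ε) (r : L → ℕ → ℝ)
    (hr : ∀ γ : L, ∀ k : ℕ,
      v γ ^ (k + 1) = w γ ^ (k + 1) * (1 + r γ k) ∧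
      |r γ k| ≤ C * Real.exp (-ε * ((k : ℝ) + 1) * l γ))
    (η : ℝ)
    (hconv : ∀ σ : ℝ, η < σ →
      Summable (fun p : L × ℕ =>
        w p.1 ^ (p.2 + 1) * Real.exp (-((p.2 : ℝ) + 1) * σ * l p.1) /
          ((p.2 : ℝ) + 1)))
    (hext : ∃ U : Set ℂ, IsOpen U ∧ {s : ℂ | η ≤ s.re} ⊆ U ∧
      ∃ g : ℂ → ℂ, AnalyticOnNhd ℂ g U ∧ (∀ s ∈ U, g s ≠ 0) ∧
        ∀ s ∈ U, η < s.re →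
          Complex.exp (zetaLog l w s) = g s / (s - (η : ℂ))) :
    (∀ s : ℂ, η < s.re →
      Summable (fun p : L × ℕ =>
        ‖(v p.1 : ℂ) ^ (p.2 + 1) *
          Complex.exp (-((p.2 : ℂ) + 1) * s * (l p.1 : ℂ)) / ((p.2 : ℂ) + 1)‖)) ∧
    ∃ U' : Set ℂ, IsOpen U' ∧ {s : ℂ | η ≤ s.re} ⊆ U' ∧
      ∃ g' : ℂ → ℂ, AnalyticOnNhd ℂ g' U' ∧ (∀ s ∈ U', g' s ≠ 0) ∧
        ∀ s ∈ U', η < s.re →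
          Complex.exp (zetaLog l v s) = g' s / (s - (η : ℂ)) := by
  obtain ⟨U, hUopen, hUsub, g, hg, hgne, hgw⟩ := hext
  -- generic bound on the dterm
  have hrle : ∀ (γ : L) (k : ℕ), |r γ k| ≤ C * Real.exp (-ε * ((k : ℝ) + 1) * l γ) :=
    fun γ k => (hr γ k).2
  have hbound : ∀ (σ : ℝ) (s : ℂ), σ ≤ s.re → ∀ p : L × ℕ,
      ‖dterm l w r s p‖ ≤
        C * (w p.1 ^ (p.2 + 1) * Real.exp (-((p.2 : ℝ) + 1) * (σ + ε) * l p.1) /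
          ((p.2 : ℝ) + 1)) := by
    intro σ s hσ p
    rw [norm_dterm l w hw r s p]
    have hlp : 0 < l p.1 := lt_of_lt_of_le hl₀ (hl p.1)
    have hk : (0 : ℝ) < (p.2 : ℝ) + 1 := by positivity
    have hexp : Real.exp (-((p.2 : ℝ) + 1) * s.re * l p.1)
        ≤ Real.exp (-((p.2 : ℝ) + 1) * σ * l p.1) := by
      apply Real.exp_le_exp.mpr
      nlinarith [mul_le_mul_of_nonneg_right (mul_le_mul_of_nonneg_left hσ hk.le) hlp.le]
    have h1 : w p.1 ^ (p.2 + 1) * |r p.1 p.2| *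
          Real.exp (-((p.2 : ℝ) + 1) * s.re * l p.1) / ((p.2 : ℝ) + 1)
        ≤ w p.1 ^ (p.2 + 1) * (C * Real.exp (-ε * ((p.2 : ℝ) + 1) * l p.1)) *
          Real.exp (-((p.2 : ℝ) + 1) * σ * l p.1) / ((p.2 : ℝ) + 1) := by
      have hE := (Real.exp_pos (-((p.2 : ℝ) + 1) * s.re * l p.1)).le
      have h2 : w p.1 ^ (p.2 + 1) * |r p.1 p.2| * Real.exp (-((p.2 : ℝ) + 1) * s.re * l p.1)
          ≤ w p.1 ^ (p.2 + 1) * (C * Real.exp (-ε * ((p.2 : ℝ) + 1) * l p.1)) *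
            Real.exp (-((p.2 : ℝ) + 1) * σ * l p.1) :=
        mul_le_mul (mul_le_mul_of_nonneg_left (hrle p.1 p.2) (pow_nonneg (hw p.1) _))
          hexp hE (mul_nonneg (pow_nonneg (hw p.1) _)
            (mul_nonneg hC.le (Real.exp_pos _).le))
      exact div_le_div_of_nonneg_right h2 hk.le
    refine h1.trans_eq ?_
    have he3 : Real.exp (-((p.2 : ℝ) + 1) * (σ + ε) * l p.1)
        = Real.exp (-ε * ((p.2 : ℝ) + 1) * l p.1) *
            Real.exp (-((p.2 : ℝ) + 1) * σ * l p.1) := by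
      rw [← Real.exp_add]; congr 1; ring
    rw [he3]; ring
  -- summability of the dterm for η - ε < Re s
  have hdsum : ∀ s : ℂ, η - ε < s.re → Summable fun p : L × ℕ => ‖dterm l w r s p‖ := by
    intro s hs
    have hsum := (hconv (s.re + ε) (by linarith)).mul_left C
    exact Summable.of_nonneg_of_le (fun p => norm_nonneg _)
      (hbound s.re s le_rfl) hsum
  -- part 1: summability for the weight v
  have part1 : ∀ s : ℂ, η < s.re →
      Summable (fun p : L × ℕ =>
        ‖(v p.1 : ℂ) ^ (p.2 + 1) *
          Complex.exp (-((p.2 : ℂ) + 1) * s * (l p.1 : ℂ)) / ((p.2 : ℂ) + 1)‖) := by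
    intro s hs
    have hsum := (hconv s.re hs).mul_left (1 + C)
    refine Summable.of_nonneg_of_le (fun p => norm_nonneg _) (fun p => ?_) hsum
    show ‖zterm l v s p‖ ≤ _
    rw [norm_zterm l v hv s p]
    have hlp : 0 < l p.1 := lt_of_lt_of_le hl₀ (hl p.1)
    have hrb : v p.1 ^ (p.2 + 1) ≤ (1 + C) * w p.1 ^ (p.2 + 1) := by
      rw [(hr p.1 p.2).1]
      have h2 : r p.1 p.2 ≤ C := by
        refine le_trans (le_trans (le_abs_self _) (hrle p.1 p.2)) ?_
        have : Real.exp (-ε * ((p.2 : ℝ) + 1) * l p.1) ≤ 1 := by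
          apply Real.exp_le_one_iff.mpr
          nlinarith [mul_pos (mul_pos hε (show (0:ℝ) < (p.2 : ℝ) + 1 by positivity)) hlp]
        nlinarith
      have hwp : 0 ≤ w p.1 ^ (p.2 + 1) := pow_nonneg (hw p.1) _
      nlinarith
    have he : 0 < Real.exp (-((p.2 : ℝ) + 1) * s.re * l p.1) := Real.exp_pos _
    have hk : (0 : ℝ) < (p.2 : ℝ) + 1 := by positivity
    rw [div_le_iff₀ hk]
    have := mul_le_mul_of_nonneg_right hrb he.le
    calc v p.1 ^ (p.2 + 1) * Real.exp (-((p.2 : ℝ) + 1) * s.re * l p.1)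
        ≤ (1 + C) * w p.1 ^ (p.2 + 1) * Real.exp (-((p.2 : ℝ) + 1) * s.re * l p.1) := this
      _ = (1 + C) * (w p.1 ^ (p.2 + 1) * Real.exp (-((p.2 : ℝ) + 1) * s.re * l p.1) /
            ((p.2 : ℝ) + 1)) * ((p.2 : ℝ) + 1) := by field_simp
  refine ⟨part1, ?_⟩
  -- the open half-plane where the difference series converges
  set V : Set ℂ := {s : ℂ | η - ε < s.re} with hV
  have hVopen : IsOpen V := isOpen_lt continuous_const Complex.continuous_re
  -- the difference function
  set D : ℂ → ℂ := fun s => ∑' p : L × ℕ, dterm l w r s p with hD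
  have hDdiff : DifferentiableOn ℂ D V := by
    intro s hs
    have hs' : η - ε < s.re := hs
    set σ₀ : ℝ := (η - ε + s.re) / 2 with hσ₀
    have hσ₀lt : σ₀ < s.re := by rw [hσ₀]; linarith
    have hσ₀gt : η - ε < σ₀ := by rw [hσ₀]; linarith
    set W : Set ℂ := {z : ℂ | σ₀ < z.re} with hW
    have hWopen : IsOpen W := isOpen_lt continuous_const Complex.continuous_re
    have hsW : s ∈ W := hσ₀lt
    have hterm : ∀ p : L × ℕ, DifferentiableOn ℂ (fun z => dterm l w r z p) W := by
      intro p
      apply Differentiable.differentiableOn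
      unfold dterm
      apply Differentiable.div_const
      apply Differentiable.mul (differentiable_const _)
      exact Complex.differentiable_exp.comp ((differentiable_id.const_mul _).mul_const _)
    have hsum := (hconv (σ₀ + ε) (by linarith)).mul_left C
    have hdo : DifferentiableOn ℂ (fun z => ∑' p : L × ℕ, dterm l w r z p) W :=
      Complex.differentiableOn_tsum_of_summable_norm hsum hterm hWopen
        (fun p z hz => hbound σ₀ z (le_of_lt hz) p)
    exact (hdo.differentiableAt (hWopen.mem_nhds hsW)).differentiableWithinAt
  -- the corrected analytic continuation
  refine ⟨U ∩ V, hUopen.inter hVopen, ?_, fun s => g s * Complex.exp (D s), ?_, ?_, ?_⟩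
  · intro s hs
    exact ⟨hUsub hs, by simp only [hV, Set.mem_setOf_eq]; have : η ≤ s.re := hs; linarith⟩
  · refine AnalyticOnNhd.mul (hg.mono Set.inter_subset_left) ?_
    exact ((hDdiff.cexp).mono Set.inter_subset_right).analyticOnNhd
      (hUopen.inter hVopen)
  · intro s hs
    exact mul_ne_zero (hgne s hs.1) (Complex.exp_ne_zero _)
  · intro s hs hsre
    have hsV : η - ε < s.re := by linarith
    -- summability of both pieces
    have hws : Summable (fun p : L × ℕ => zterm l w s p) := by
      apply Summable.of_norm
      have : (fun p : L × ℕ => ‖zterm l w s p‖) = fun p : L × ℕ =>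
          w p.1 ^ (p.2 + 1) * Real.exp (-((p.2 : ℝ) + 1) * s.re * l p.1) / ((p.2 : ℝ) + 1) :=
        funext (norm_zterm l w hw s)
      rw [this]; exact hconv s.re hsre
    have hds : Summable (fun p : L × ℕ => dterm l w r s p) :=
      Summable.of_norm (hdsum s hsV)
    -- pointwise decomposition
    have hpt : ∀ p : L × ℕ, zterm l v s p = zterm l w s p + dterm l w r s p := by
      intro p
      have h1 : ((v p.1 ^ (p.2 + 1) : ℝ) : ℂ)
          = ((w p.1 ^ (p.2 + 1) * (1 + r p.1 p.2) : ℝ) : ℂ) := by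
        exact congrArg Complex.ofReal (hr p.1 p.2).1
      push_cast at h1
      unfold zterm dterm
      rw [h1]
      ring
    have hsplit : zetaLog l v s = zetaLog l w s + D s := by
      rw [zetaLog_eq_tsum_zterm, zetaLog_eq_tsum_zterm]
      calc (∑' p : L × ℕ, zterm l v s p)
          = ∑' p : L × ℕ, (zterm l w s p + dterm l w r s p) := by
            exact tsum_congr hpt
        _ = (∑' p : L × ℕ, zterm l w s p) + ∑' p : L × ℕ, dterm l w r s p :=
            hws.tsum_add hds
    rw [hsplit, Complex.exp_add, hgw s hs.1 hsre, div_mul_eq_mul_div]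
end

section
/- Let L be a countable set, l : L → ℝ a function with l(γ) ≥ l₀ for all γ ∈ L for some constant l₀ > 0, w, v : L → [0,∞) two weights, C > 0, ε > 0, and r : L × ℕ≥1 → ℝ with v(γ)^k = w(γ)^k·(1 + r(γ,k)) and |r(γ,k)| ≤ C·e^{−ε·k·l(γ)} for all γ ∈ L and k ≥ 1. Assume the double series Σ_{γ∈L} Σ_{k≥1} w(γ)^k · e^{−k·σ·l(γ)}/k converges for every real σ > η. Then: (i) the double series G(s) := Σ_{γ∈L} Σ_{k≥1} w(γ)^k·r(γ,k)·e^{−k·s·l(γ)}/k converges absolutely for every s ∈ ℂ with Re(s) > η − ε and defines an analytic function on {Re(s) > η − ε}; and (ii) for every s with Re(s) > η one has the factorization Z_v(s) = Z_w(s)·exp(G(s)), where Z_u(s) := exp( Σ_{γ,k} u(γ)^k e^{−ksl(γ)}/k ) for u = w, v. -/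
/-- The error zeta factor `G(s) = Σ_{γ,k} w(γ)^k r(γ,k) e^{-k s l(γ)} / k`. -/
noncomputable def errorZetaLog {L : Type*} (l w : L → ℝ) (r : L → ℕ → ℝ)
    (s : ℂ) : ℂ :=
  ∑' p : L × ℕ, (w p.1 : ℂ) ^ (p.2 + 1) * (r p.1 p.2 : ℂ) *
    Complex.exp (-((p.2 : ℂ) + 1) * s * (l p.1 : ℂ)) / ((p.2 : ℂ) + 1)

lemma re_aux (k : ℕ) (s : ℂ) (l : ℝ) :
    (-((k : ℂ) + 1) * s * (l : ℂ)).re = -((k : ℝ) + 1) * s.re * l := by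
  have h : (-((k : ℂ) + 1) * s * (l : ℂ)) = ((-(((k : ℝ) + 1) * l) : ℝ) : ℂ) * s := by
    push_cast; ring
  rw [h, Complex.re_ofReal_mul]; ring

lemma norm_exp_aux (k : ℕ) (s : ℂ) (l : ℝ) :
    ‖Complex.exp (-((k : ℂ) + 1) * s * (l : ℂ))‖
      = Real.exp (-((k : ℝ) + 1) * s.re * l) := by
  rw [Complex.norm_exp, re_aux]

lemma norm_k_aux (k : ℕ) : ‖((k : ℂ) + 1)‖ = (k : ℝ) + 1 := by
  rw [show ((k : ℂ) + 1) = (((k : ℝ) + 1 : ℝ) : ℂ) by push_cast; ring,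
    Complex.norm_real, Real.norm_eq_abs, abs_of_pos (by positivity)]

lemma norm_err_term (w r l : ℝ) (hw : 0 ≤ w) (k : ℕ) (s : ℂ) :
    ‖(w : ℂ) ^ (k + 1) * (r : ℂ) * Complex.exp (-((k : ℂ) + 1) * s * (l : ℂ))
        / ((k : ℂ) + 1)‖
      = w ^ (k + 1) * |r| * Real.exp (-((k : ℝ) + 1) * s.re * l) / ((k : ℝ) + 1) := by
  rw [norm_div, norm_mul, norm_mul, norm_pow, norm_exp_aux, norm_k_aux,
    Complex.norm_real, Complex.norm_real, Real.norm_eq_abs, Real.norm_eq_abs,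
    abs_of_nonneg hw]

lemma norm_zeta_term (w l : ℝ) (hw : 0 ≤ w) (k : ℕ) (s : ℂ) :
    ‖(w : ℂ) ^ (k + 1) * Complex.exp (-((k : ℂ) + 1) * s * (l : ℂ))
        / ((k : ℂ) + 1)‖
      = w ^ (k + 1) * Real.exp (-((k : ℝ) + 1) * s.re * l) / ((k : ℝ) + 1) := by
  rw [norm_div, norm_mul, norm_pow, norm_exp_aux, norm_k_aux,
    Complex.norm_real, Real.norm_eq_abs, abs_of_nonneg hw]

/-- Factorization `Z_v = Z_w · exp G` for asymptotically exponentially close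
weights: the error series `G` converges absolutely on the strictly larger
half-plane `Re s > η - ε` and is analytic there; on `Re s > η` the weighted
zeta functions satisfy `Z_v(s) = Z_w(s) · exp(G(s))`. -/
theorem close_weights_zeta_factorization
    {L : Type*} [Countable L] (l : L → ℝ) (l₀ : ℝ) (hl₀ : 0 < l₀)
    (hl : ∀ γ, l₀ ≤ l γ) (w v : L → ℝ) (hw : ∀ γ, 0 ≤ w γ) (hv : ∀ γ, 0 ≤ v γ)
    (C ε : ℝ) (hC : 0 < C) (hε : 0 < ε) (r : L → ℕ → ℝ)
    (hr : ∀ γ : L, ∀ k : ℕ,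
      v γ ^ (k + 1) = w γ ^ (k + 1) * (1 + r γ k) ∧
      |r γ k| ≤ C * Real.exp (-ε * ((k : ℝ) + 1) * l γ))
    (η : ℝ)
    (hconv : ∀ σ : ℝ, η < σ →
      Summable (fun p : L × ℕ =>
        w p.1 ^ (p.2 + 1) * Real.exp (-((p.2 : ℝ) + 1) * σ * l p.1) /
          ((p.2 : ℝ) + 1))) :
    (∀ s : ℂ, η - ε < s.re →
      Summable (fun p : L × ℕ =>
        ‖(w p.1 : ℂ) ^ (p.2 + 1) * (r p.1 p.2 : ℂ) *
          Complex.exp (-((p.2 : ℂ) + 1) * s * (l p.1 : ℂ)) / ((p.2 : ℂ) + 1)‖)) ∧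
    AnalyticOnNhd ℂ (fun s : ℂ => errorZetaLog l w r s) {s : ℂ | η - ε < s.re} ∧
    ∀ s : ℂ, η < s.re →
      Complex.exp (zetaLog l v s) =
        Complex.exp (zetaLog l w s) * Complex.exp (errorZetaLog l w r s) := by
  -- the majorant at abscissa σ'
  set u : ℝ → L × ℕ → ℝ := fun σ' p =>
    C * (w p.1 ^ (p.2 + 1) * Real.exp (-((p.2 : ℝ) + 1) * (σ' + ε) * l p.1)
      / ((p.2 : ℝ) + 1)) with hu_def
  have hu_summable : ∀ σ' : ℝ, η - ε < σ' → Summable (u σ') := fun σ' h =>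
    (hconv (σ' + ε) (by linarith)).mul_left C
  have hbound : ∀ (σ' : ℝ) (s : ℂ), σ' ≤ s.re → ∀ p : L × ℕ,
      ‖(w p.1 : ℂ) ^ (p.2 + 1) * (r p.1 p.2 : ℂ) *
        Complex.exp (-((p.2 : ℂ) + 1) * s * (l p.1 : ℂ)) / ((p.2 : ℂ) + 1)‖
        ≤ u σ' p := by
    intro σ' s hs p
    rw [norm_err_term _ _ _ (hw p.1)]
    have hk1 : (0 : ℝ) < (p.2 : ℝ) + 1 := by positivity
    have hr' := (hr p.1 p.2).2
    have hl' : 0 < l p.1 := lt_of_lt_of_le hl₀ (hl p.1)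
    have hexp : Real.exp (-((p.2 : ℝ) + 1) * s.re * l p.1)
        ≤ Real.exp (-((p.2 : ℝ) + 1) * σ' * l p.1) := by
      apply Real.exp_le_exp.mpr
      nlinarith [mul_le_mul_of_nonneg_right (mul_le_mul_of_nonneg_left hs hk1.le) hl'.le]
    have hrw : u σ' p = w p.1 ^ (p.2 + 1) *
        (C * Real.exp (-ε * ((p.2 : ℝ) + 1) * l p.1)) *
        Real.exp (-((p.2 : ℝ) + 1) * σ' * l p.1) / ((p.2 : ℝ) + 1) := by
      simp only [hu_def]
      rw [show -((p.2 : ℝ) + 1) * (σ' + ε) * l p.1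
        = (-ε * ((p.2 : ℝ) + 1) * l p.1) + (-((p.2 : ℝ) + 1) * σ' * l p.1) by ring,
        Real.exp_add]
      ring
    rw [hrw]
    gcongr w p.1 ^ (p.2 + 1) * ?_ * ?_ / ((p.2 : ℝ) + 1) <;>
      first
      | exact hr'
      | exact hexp
      | exact pow_nonneg (hw p.1) _
      | exact mul_nonneg (pow_nonneg (hw p.1) _) (by positivity)
      | positivity
  refine ⟨?_, ?_, ?_⟩
  · intro s hs
    exact Summable.of_nonneg_of_le (fun p => norm_nonneg _) (hbound s.re s le_rfl)
      (hu_summable s.re hs)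
  · intro s₀ hs₀
    simp only [Set.mem_setOf_eq] at hs₀
    set σ' := (η - ε + s₀.re) / 2 with hσ'def
    have h1 : η - ε < σ' := by rw [hσ'def]; linarith
    have h2 : σ' < s₀.re := by rw [hσ'def]; linarith
    have hopen : IsOpen {s : ℂ | σ' < s.re} :=
      isOpen_lt continuous_const Complex.continuous_re
    have hdiff : DifferentiableOn ℂ
        (fun s : ℂ => ∑' p : L × ℕ, (w p.1 : ℂ) ^ (p.2 + 1) * (r p.1 p.2 : ℂ) *
          Complex.exp (-((p.2 : ℂ) + 1) * s * (l p.1 : ℂ)) / ((p.2 : ℂ) + 1))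
        {s : ℂ | σ' < s.re} := by
      apply Complex.differentiableOn_tsum_of_summable_norm (hu_summable σ' h1)
        (fun p => ?_) hopen (fun p x hx => hbound σ' x (le_of_lt hx) p)
      apply Differentiable.differentiableOn
      apply Differentiable.div_const
      apply Differentiable.const_mul
      apply Differentiable.cexp
      exact (differentiable_id.const_mul _).mul_const _
    exact (hdiff.analyticOnNhd hopen) s₀ h2
  · intro s hs
    have hsum_w : Summable (fun p : L × ℕ => (w p.1 : ℂ) ^ (p.2 + 1) *
        Complex.exp (-((p.2 : ℂ) + 1) * s * (l p.1 : ℂ)) / ((p.2 : ℂ) + 1)) := by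
      apply Summable.of_norm
      refine (summable_congr fun p => ?_).mpr (hconv s.re hs)
      exact norm_zeta_term _ _ (hw p.1) _ _
    have hsum_e : Summable (fun p : L × ℕ => (w p.1 : ℂ) ^ (p.2 + 1) * (r p.1 p.2 : ℂ) *
        Complex.exp (-((p.2 : ℂ) + 1) * s * (l p.1 : ℂ)) / ((p.2 : ℂ) + 1)) :=
      Summable.of_norm (Summable.of_nonneg_of_le (fun p => norm_nonneg _)
        (hbound s.re s le_rfl) (hu_summable s.re (by linarith)))
    rw [← Complex.exp_add]
    congr 1
    unfold zetaLog errorZetaLog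
    rw [← Summable.tsum_add hsum_w hsum_e]
    apply tsum_congr
    intro p
    have h1 := (hr p.1 p.2).1
    have hc : (v p.1 : ℂ) ^ (p.2 + 1)
        = (w p.1 : ℂ) ^ (p.2 + 1) * (1 + (r p.1 p.2 : ℂ)) := by
      have h2 : ((v p.1 ^ (p.2 + 1) : ℝ) : ℂ)
          = ((w p.1 ^ (p.2 + 1) * (1 + r p.1 p.2) : ℝ) : ℂ) := by exact_mod_cast h1
      push_cast at h2
      exact h2
    rw [hc]; ring
end

section
/- Let n ≥ 1, let P be a real (2n)×(2n) matrix, and let a > 0, ℓ > 0. Suppose the multiset of roots in ℂ (with multiplicity) of the characteristic polynomial of P can be enumerated as λ₁, …, λ_{2n} with |λ_i| ≥ e^{aℓ} for 1 ≤ i ≤ n and |λ_i| ≤ e^{−aℓ} for n+1 ≤ i ≤ 2n. Then for every integer k ≥ 1, det(I − P^k) ≠ 0 and | |det(I − P^k)|^{−1/2} · (Π_{i=1}^{n} |λ_i|)^{k/2} − 1 | ≤ (1 − e^{−akℓ})^{−n} − 1. -/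
open Polynomial Matrix

lemma multiset_finset_prod_swap {α β γ : Type*} [CommMonoid γ] (s : Multiset α) (t : Finset β)
    (f : α → β → γ) :
    (s.map (fun a => ∏ b ∈ t, f a b)).prod = ∏ b ∈ t, (s.map (fun a => f a b)).prod := by
  induction s using Multiset.induction with
  | empty => simp
  | cons a s ih => simp [Multiset.prod_cons, ih, Finset.prod_mul_distrib]

lemma eval_charpoly_complex {m : ℕ} (M : Matrix (Fin m) (Fin m) ℂ) (r : ℂ) :
    M.charpoly.eval r = (r • (1 : Matrix (Fin m) (Fin m) ℂ) - M).det := by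
  rw [Matrix.charpoly, ← Polynomial.coe_evalRingHom, RingHom.map_det]
  congr 1
  ext i j
  rcases eq_or_ne i j with rfl | hij
  · simp [charmatrix_apply_eq, Matrix.one_apply_eq]
  · simp [charmatrix_apply_ne _ _ _ hij, Matrix.one_apply_ne hij]

lemma det_one_sub_pow_eq_prod {m : ℕ} (M : Matrix (Fin m) (Fin m) ℂ) (lam : Fin m → ℂ)
    (h : M.charpoly.roots = Finset.univ.val.map lam) (k : ℕ) (hk : 1 ≤ k) :
    ((1 : Matrix (Fin m) (Fin m) ℂ) - M ^ k).det = ∏ i, (1 - lam i ^ k) := by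
  have hchar : M.charpoly = (Finset.univ.val.map (fun i => X - C (lam i))).prod := by
    conv_lhs => rw [(IsAlgClosed.splits M.charpoly).eq_prod_roots_of_monic (Matrix.charpoly_monic M)]
    rw [h, Multiset.map_map]
    rfl
  have heval : ∀ t : ℂ, M.charpoly.eval t = ∏ i, (t - lam i) := by
    intro t
    rw [hchar, Polynomial.eval_multiset_prod, Multiset.map_map]
    simp [Finset.prod]
  have hdet : ∀ t : ℂ, (M - t • 1).det = ∏ i, (lam i - t) := by
    intro t
    rw [show M - t • 1 = -(t • (1 : Matrix (Fin m) (Fin m) ℂ) - M) from (neg_sub _ _).symm,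
      Matrix.det_neg, ← eval_charpoly_complex, heval, Fintype.card_fin,
      show ((-1:ℂ))^m = ∏ _i : Fin m, (-1:ℂ) by simp, ← Finset.prod_mul_distrib]
    exact Finset.prod_congr rfl (fun i _ => by ring)
  set q : ℂ[X] := X ^ k - C 1 with hq
  have hqm : q.Monic := Polynomial.monic_X_pow_sub_C _ (by omega)
  have hqprod : q = (q.roots.map (fun z => X - C z)).prod :=
    (IsAlgClosed.splits q).eq_prod_roots_of_monic hqm
  have hqeval : ∀ t : ℂ, (q.roots.map (fun z => t - z)).prod = t ^ k - 1 := by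
    intro t
    have h0 : q.eval t = t ^ k - 1 := by simp [hq]
    rw [← h0]
    conv_rhs => rw [hqprod]
    rw [Polynomial.eval_multiset_prod, Multiset.map_map]
    simp
  set l : List ℂ := q.roots.toList with hldef
  have hl : (l : Multiset ℂ) = q.roots := Multiset.coe_toList _
  have hMk : M ^ k - 1 = (l.map (fun z => M - z • 1)).prod := by
    have h1 : Polynomial.aeval M q = M ^ k - 1 := by simp [hq]
    have h2 : q = (l.map (fun z => X - C z)).prod := by
      conv_lhs => rw [hqprod, ← hl]
      rw [Multiset.map_coe, Multiset.prod_coe]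
    rw [← h1, h2, map_list_prod (Polynomial.aeval M), List.map_map]
    congr 1
    apply List.map_congr_left
    intro z _
    simp [Algebra.algebraMap_eq_smul_one]
  have hdet2 : (M ^ k - 1).det = ∏ i, (lam i ^ k - 1) := by
    rw [hMk, ← Matrix.coe_detMonoidHom, MonoidHom.map_list_prod, List.map_map]
    have hfun : (Matrix.detMonoidHom ∘ fun z => M - z • 1) = fun z : ℂ => ∏ i, (lam i - z) := by
      funext z
      simpa [Matrix.coe_detMonoidHom] using hdet z
    rw [hfun, ← Multiset.prod_coe, ← Multiset.map_coe, hl, multiset_finset_prod_swap]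
    exact Finset.prod_congr rfl (fun i _ => hqeval (lam i))
  rw [show (1 : Matrix (Fin m) (Fin m) ℂ) - M ^ k = -(M ^ k - 1) from (neg_sub _ _).symm,
    Matrix.det_neg, hdet2, Fintype.card_fin,
    show ((-1:ℂ))^m = ∏ _i : Fin m, (-1:ℂ) by simp, ← Finset.prod_mul_distrib]
  exact Finset.prod_congr rfl (fun i _ => by ring)

lemma abs_sub_one_le_of_between {x Li Ui : ℝ} (h1 : x ≤ Li) (h2 : Ui ≤ x)
    (h3 : 2 ≤ Li + Ui) : |x - 1| ≤ Li - 1 := by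
  rw [abs_le]
  constructor <;> linarith

/-- Estimate comparing the Guillarmou–Naud weight `|det(I - P^k)|^{-1/2}` of
the `k`-th iterate of a closed geodesic of length `ℓ` with the
Sinai–Bowen–Ruelle weight `(Π_{i<n} |λ_i|)^{-k/2}`: if the complex eigenvalues
(roots of the characteristic polynomial, with multiplicity) of the real
`2n × 2n` Poincaré map `P` are enumerated with the first `n` of modulus
`≥ e^{aℓ}` and the last `n` of modulus `≤ e^{-aℓ}`, then for every `k ≥ 1`,
`det(I - P^k) ≠ 0` and the multiplicative error is at most
`(1 - e^{-akℓ})^{-n} - 1`. -/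
theorem det_one_sub_poincare_iterate_SBR_weight
    (n : ℕ) (hn : 1 ≤ n) (P : Matrix (Fin (2 * n)) (Fin (2 * n)) ℝ)
    (a ℓ : ℝ) (ha : 0 < a) (hℓ : 0 < ℓ) (lam : Fin (2 * n) → ℂ)
    (hroots : (P.charpoly.map (algebraMap ℝ ℂ)).roots =
      Finset.univ.val.map lam)
    (hexp : ∀ i : Fin (2 * n), (i : ℕ) < n → Real.exp (a * ℓ) ≤ ‖lam i‖)
    (hcon : ∀ i : Fin (2 * n), n ≤ (i : ℕ) → ‖lam i‖ ≤ Real.exp (-(a * ℓ))) :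
    ∀ k : ℕ, 1 ≤ k →
      (1 - P ^ k).det ≠ 0 ∧
      |(|(1 - P ^ k).det| ^ (-(1 / 2 : ℝ)) *
          (∏ i ∈ Finset.univ.filter (fun i : Fin (2 * n) => (i : ℕ) < n),
            ‖lam i‖) ^ ((k : ℝ) / 2) - 1)| ≤
        (1 - Real.exp (-(a * (k : ℝ) * ℓ))) ^ (-(n : ℤ)) - 1 := by
  intro k hk
  have hk0 : (0:ℝ) < k := by exact_mod_cast hk
  set M : Matrix (Fin (2 * n)) (Fin (2 * n)) ℂ := P.map (algebraMap ℝ ℂ) with hM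
  have hMchar : M.charpoly.roots = Finset.univ.val.map lam := by
    rw [hM, Matrix.charpoly_map]; exact hroots
  -- the determinant over ℂ
  have hdetC : algebraMap ℝ ℂ ((1 - P ^ k).det) = ∏ i, (1 - lam i ^ k) := by
    have hmap : ((algebraMap ℝ ℂ).mapMatrix (1 - P ^ k) :
        Matrix (Fin (2*n)) (Fin (2*n)) ℂ) = 1 - M ^ k := by
      rw [map_sub, _root_.map_one, map_pow, hM, RingHom.mapMatrix_apply]
    calc algebraMap ℝ ℂ ((1 - P ^ k).det)
        = ((algebraMap ℝ ℂ).mapMatrix (1 - P ^ k) : Matrix (Fin (2*n)) (Fin (2*n)) ℂ).det :=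
          (RingHom.map_det _ _)
      _ = (1 - M ^ k).det := by rw [hmap]
      _ = ∏ i, (1 - lam i ^ k) := det_one_sub_pow_eq_prod M lam hMchar k hk
  have habs : |(1 - P ^ k).det| = ∏ i, ‖1 - lam i ^ k‖ := by
    have := congrArg norm hdetC
    simpa [Complex.coe_algebraMap, Complex.norm_real, Real.norm_eq_abs] using this
  -- the small parameter
  set ε : ℝ := Real.exp (-(a * (k : ℝ) * ℓ)) with hεdef
  have hε0 : 0 < ε := Real.exp_pos _
  have hε1 : ε < 1 := Real.exp_lt_one_iff.2 (by nlinarith [mul_pos (mul_pos ha hk0) hℓ])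
  have hεinv : ε⁻¹ = Real.exp (a * ℓ) ^ k := by
    rw [← Real.exp_nat_mul, hεdef, ← Real.exp_neg]
    ring_nf
  -- per-factor data
  have hlamne : ∀ i : Fin (2*n), (i:ℕ) < n → ‖lam i‖ ^ k ≠ 0 := by
    intro i hi
    have h1 : (0:ℝ) < ‖lam i‖ := lt_of_lt_of_le (Real.exp_pos _) (hexp i hi)
    positivity
  have hinv_le : ∀ i : Fin (2*n), (i:ℕ) < n → ‖(lam i ^ k)⁻¹‖ ≤ ε := by
    intro i hi
    rw [norm_inv, norm_pow]
    refine inv_le_of_inv_le₀ hε0 ?_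
    rw [hεinv]
    exact pow_le_pow_left₀ (Real.exp_pos _).le (hexp i hi) k
  have hpow_le : ∀ i : Fin (2*n), n ≤ (i:ℕ) → ‖lam i ^ k‖ ≤ ε := by
    intro i hi
    rw [norm_pow]
    calc ‖lam i‖ ^ k ≤ Real.exp (-(a * ℓ)) ^ k :=
          pow_le_pow_left₀ (norm_nonneg _) (hcon i hi) k
      _ = ε := by rw [← Real.exp_nat_mul, hεdef]; ring_nf
  -- split the product
  set g : Fin (2*n) → ℝ := fun i => ‖(lam i ^ k)⁻¹ - 1‖ with hg
  set D : Fin (2*n) → ℝ := fun i => ‖1 - lam i ^ k‖ with hD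
  have hfact : ∀ i : Fin (2*n), (i:ℕ) < n → D i = ‖lam i‖ ^ k * g i := by
    intro i hi
    have hz : lam i ^ k ≠ 0 := by
      intro h
      exact hlamne i hi (by rw [← norm_pow, h, norm_zero])
    have : (1 : ℂ) - lam i ^ k = lam i ^ k * ((lam i ^ k)⁻¹ - 1) := by
      field_simp
    rw [hD, hg]
    simp only [this, norm_mul, norm_pow]
  have hbound : ∀ (w : ℂ), ‖w‖ ≤ ε → 1 - ε ≤ ‖w - 1‖ ∧ ‖w - 1‖ ≤ 1 + ε := by
    intro w hw
    constructor
    · have h1 : ‖(1:ℂ)‖ - ‖w‖ ≤ ‖1 - w‖ := norm_sub_norm_le _ _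
      rw [norm_sub_rev]
      simp only [norm_one] at h1
      linarith
    · calc ‖w - 1‖ ≤ ‖w‖ + ‖(1:ℂ)‖ := norm_sub_le _ _
        _ ≤ 1 + ε := by simp only [norm_one]; linarith
  have hgb : ∀ i : Fin (2*n), (i:ℕ) < n → 1 - ε ≤ g i ∧ g i ≤ 1 + ε :=
    fun i hi => hbound _ (hinv_le i hi)
  have hDb : ∀ i : Fin (2*n), n ≤ (i:ℕ) → 1 - ε ≤ D i ∧ D i ≤ 1 + ε := by
    intro i hi
    have := hbound (lam i ^ k) (hpow_le i hi)
    rw [norm_sub_rev] at this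
    simpa [hD] using this
  set s : Finset (Fin (2*n)) := Finset.univ.filter (fun i : Fin (2*n) => (i : ℕ) < n) with hs
  set sc : Finset (Fin (2*n)) := Finset.univ.filter (fun i : Fin (2*n) => ¬ (i : ℕ) < n) with hsc
  set A : ℝ := ∏ i ∈ s, ‖lam i‖ with hA
  set R : ℝ := (∏ i ∈ s, g i) * (∏ i ∈ sc, D i) with hR
  have hmem : ∀ i ∈ s, (i:ℕ) < n := by
    intro i hi
    rw [hs, Finset.mem_filter] at hi
    exact hi.2
  have hmemc : ∀ i ∈ sc, n ≤ (i:ℕ) := by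
    intro i hi
    rw [hsc, Finset.mem_filter] at hi
    exact le_of_not_gt hi.2
  have habs2 : |(1 - P ^ k).det| = A ^ k * R := by
    rw [habs, ← Finset.prod_filter_mul_prod_filter_not Finset.univ
      (fun i : Fin (2*n) => (i : ℕ) < n) D, ← hs, ← hsc]
    have h1 : ∏ i ∈ s, D i = (∏ i ∈ s, ‖lam i‖ ^ k) * ∏ i ∈ s, g i := by
      rw [← Finset.prod_mul_distrib]
      exact Finset.prod_congr rfl (fun i hi => hfact i (hmem i hi))
    rw [h1, Finset.prod_pow, ← hA, hR]
    ring
  -- estimates on A and R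
  have hA1 : 1 ≤ A := by
    rw [hA]
    have h := Finset.prod_le_prod (s := s) (f := fun _ => (1:ℝ)) (g := fun i => ‖lam i‖)
      (by intro i _; norm_num)
      (fun i hi => le_trans (Real.one_le_exp (by positivity)) (hexp i (hmem i hi)))
    simpa using h
  have hApos : (0:ℝ) < A := lt_of_lt_of_le zero_lt_one hA1
  have hcard : s.card + sc.card = 2 * n := by
    rw [hs, hsc, Finset.card_filter_add_card_filter_not, Finset.card_univ,
      Fintype.card_fin]
  have hRlow : (1 - ε) ^ (2 * n) ≤ R := by
    have h1 : (1 - ε) ^ s.card ≤ ∏ i ∈ s, g i := by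
      rw [← Finset.prod_const]
      exact Finset.prod_le_prod (fun i _ => by linarith) (fun i hi =>
        (hgb i (hmem i hi)).1)
    have h2 : (1 - ε) ^ sc.card ≤ ∏ i ∈ sc, D i := by
      rw [← Finset.prod_const]
      exact Finset.prod_le_prod (fun i _ => by linarith) (fun i hi =>
        (hDb i (hmemc i hi)).1)
    calc (1 - ε) ^ (2 * n) = (1 - ε) ^ s.card * (1 - ε) ^ sc.card := by
          rw [← pow_add, hcard]
      _ ≤ R := mul_le_mul h1 h2 (pow_nonneg (by linarith) _)
          (le_trans (pow_nonneg (by linarith) _) h1)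
  have hRup : R ≤ (1 + ε) ^ (2 * n) := by
    have h1 : ∏ i ∈ s, g i ≤ (1 + ε) ^ s.card := by
      rw [← Finset.prod_const]
      exact Finset.prod_le_prod (fun i hi => by
        have := (hgb i (hmem i hi)).1; linarith) (fun i hi =>
        (hgb i (hmem i hi)).2)
    have h2 : ∏ i ∈ sc, D i ≤ (1 + ε) ^ sc.card := by
      rw [← Finset.prod_const]
      exact Finset.prod_le_prod (fun i hi => by
        have := (hDb i (hmemc i hi)).1; linarith) (fun i hi =>
        (hDb i (hmemc i hi)).2)
    calc R ≤ (1 + ε) ^ s.card * (1 + ε) ^ sc.card := by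
          refine mul_le_mul h1 h2 (Finset.prod_nonneg (fun i hi => ?_)) (pow_nonneg (by linarith) _)
          exact norm_nonneg _
      _ = (1 + ε) ^ (2 * n) := by rw [← pow_add, hcard]
  have hRpos : (0:ℝ) < R := lt_of_lt_of_le (pow_pos (by linarith) _) hRlow
  have hdetpos : (0:ℝ) < |(1 - P ^ k).det| := by
    rw [habs2]; positivity
  have hdetne : (1 - P ^ k).det ≠ 0 := by
    intro h
    rw [h, abs_zero] at hdetpos
    exact lt_irrefl _ hdetpos
  refine ⟨hdetne, ?_⟩
  -- simplify the expression to (√R)⁻¹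
  have key : |(1 - P ^ k).det| ^ (-(1 / 2 : ℝ)) * A ^ ((k : ℝ) / 2) = (Real.sqrt R)⁻¹ := by
    rw [habs2, Real.mul_rpow (by positivity) hRpos.le]
    have hAk : ((A ^ k : ℝ)) ^ (-(1/2 : ℝ)) = A ^ (-((k:ℝ)/2)) := by
      rw [← Real.rpow_natCast A k, ← Real.rpow_mul hApos.le,
        show ((k:ℝ) * (-(1/2)) = -((k:ℝ)/2)) from by ring]
    rw [hAk, mul_right_comm, ← Real.rpow_add hApos,
      show (-((k:ℝ)/2) + (k:ℝ)/2 = 0) from by ring, Real.rpow_zero, one_mul,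
      Real.rpow_neg hRpos.le, Real.sqrt_eq_rpow]
  rw [key]
  -- final elementary estimate
  set L : ℝ := (1 - ε) ^ n with hL
  set U : ℝ := (1 + ε) ^ n with hU
  have hLpos : (0:ℝ) < L := pow_pos (by linarith) _
  have hUpos : (0:ℝ) < U := pow_pos (by linarith) _
  have hsqL : L ≤ Real.sqrt R := by
    have : (1 - ε) ^ (2 * n) = L ^ 2 := by rw [hL, ← pow_mul, Nat.mul_comm]
    calc L = Real.sqrt (L ^ 2) := (Real.sqrt_sq hLpos.le).symm
      _ ≤ Real.sqrt R := Real.sqrt_le_sqrt (by rw [← this]; exact hRlow)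
  have hsqU : Real.sqrt R ≤ U := by
    have : (1 + ε) ^ (2 * n) = U ^ 2 := by rw [hU, ← pow_mul, Nat.mul_comm]
    calc Real.sqrt R ≤ Real.sqrt (U ^ 2) := Real.sqrt_le_sqrt (by rw [← this]; exact hRup)
      _ = U := Real.sqrt_sq hUpos.le
  have hsqpos : (0:ℝ) < Real.sqrt R := lt_of_lt_of_le hLpos hsqL
  have hx1 : (Real.sqrt R)⁻¹ ≤ L⁻¹ := by
    exact inv_anti₀ hLpos hsqL
  have hx2 : U⁻¹ ≤ (Real.sqrt R)⁻¹ := inv_anti₀ hsqpos hsqU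
  have hLU : L * U ≤ 1 := by
    rw [hL, hU, ← mul_pow]
    have e1 : (0:ℝ) ≤ (1 - ε) * (1 + ε) :=
      mul_nonneg (by linarith) (by linarith)
    have e2 : (1 - ε) * (1 + ε) ≤ 1 := by
      have hh : (1 - ε) * (1 + ε) = 1 - ε ^ 2 := by ring
      have h2 := sq_nonneg ε
      linarith [hh.le, hh.ge]
    exact pow_le_one₀ e1 e2
  have hAM : 2 ≤ L⁻¹ + U⁻¹ := by
    have h2 : 2 * (L * U) ≤ L + U := by
      nlinarith [sq_nonneg (L - U), mul_pos hLpos hUpos,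
        mul_nonneg (mul_pos hLpos hUpos).le (sub_nonneg.2 hLU)]
    rw [inv_eq_one_div, inv_eq_one_div, div_add_div _ _ (ne_of_gt hLpos) (ne_of_gt hUpos),
      le_div_iff₀ (mul_pos hLpos hUpos)]
    linarith
  have hrhs : (1 - ε) ^ (-(n : ℤ)) - 1 = L⁻¹ - 1 := by
    rw [_root_.zpow_neg, zpow_natCast, hL]
  rw [hrhs]
  exact abs_sub_one_le_of_between hx1 hx2 hAM
end
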